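/- In the case α = -4 of the proof of Theorem 1 (K ≠ 0 constant, e₁(κ₁) ≠ 0), the relation 2κ₁²K(2|Φ|²K - 3) - 3κ₁⁴ + K² = 0 determines |Φ|² = (1/4)(3κ₁²/K² - 1/κ₁² + 6/K); substituting this into e₁(|Φ|²) = 2γ with γ = |Φ|²(K - κ₁²)/(2κ₁K + (α+2)κ₁³)·e₁(κ₁) and α = -4 yields κ₁² - K = 0, i.e. κ₁ is constant. -/

import Mathlib

/-- Case α = -4 in the proof of Theorem 1 (K ≠ 0 constant, e₁(κ₁) ≠ 0):
the relation 2κ₁²K(2|Φ|²K - 3) - 3κ₁⁴ + K² = 0 determines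
|Φ|² = (1/4)(3κ₁²/K² - 1/κ₁² + 6/K); substituting into e₁(|Φ|²) = 2γ with
γ = |Φ|²(K - κ₁²)/(2κ₁K + (α+2)κ₁³)·e₁(κ₁), α = -4, yields κ₁² - K = 0,
i.e. κ₁ is constant. -/
theorem case_alpha_minus_four_constant_gauss
    {M : Type*}
    (D : (M → ℝ) → (M → ℝ))
    (hadd : ∀ f g : M → ℝ, D (f + g) = D f + D g)
    (hmul : ∀ f g : M → ℝ, D (f * g) = D f * g + f * D g)
    (hconst : ∀ r : ℝ, D (fun _ => r) = 0)
    (K : ℝ) (hK : K ≠ 0)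
    (κ₁ Φsq : M → ℝ)
    (hκ : ∀ x, κ₁ x ≠ 0)
    (hκK : ∀ x, κ₁ x ^ 2 ≠ K)
    (he : ∀ x, D κ₁ x ≠ 0)
    (hrel : ∀ x, 2 * κ₁ x ^ 2 * K * (2 * Φsq x * K - 3) - 3 * κ₁ x ^ 4 + K ^ 2 = 0)
    (hγ : ∀ x, D Φsq x = 2 * (Φsq x * (K - κ₁ x ^ 2)
        / (2 * κ₁ x * K + ((-4 : ℝ) + 2) * κ₁ x ^ 3) * D κ₁ x)) :
    (∀ x, Φsq x = (3 * κ₁ x ^ 2 / K ^ 2 - 1 / κ₁ x ^ 2 + 6 / K) / 4) ∧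
    (∀ x, κ₁ x ^ 2 = K) := by
  -- The function F built from the relation is identically 0
  have hF : ((fun _ => (4 * K ^ 2 : ℝ)) * (κ₁ * κ₁ * Φsq)
      + ((fun _ => (-6 * K : ℝ)) * (κ₁ * κ₁)
        + ((fun _ => (-3 : ℝ)) * (κ₁ * κ₁ * (κ₁ * κ₁)) + (fun _ => (K ^ 2 : ℝ)))))
      = (fun _ => (0 : ℝ)) := by
    funext x
    have := hrel x
    simp only [Pi.add_apply, Pi.mul_apply]
    nlinarith [this]
  have hDF := congrArg D hF
  rw [hconst 0] at hDF
  simp only [hadd, hmul, hconst] at hDF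
  have key : ∀ x, κ₁ x ^ 2 = K := by
    intro x
    have hE := congrFun hDF x
    simp only [Pi.add_apply, Pi.mul_apply, Pi.zero_apply] at hE
    set k := κ₁ x with hk
    set a := D κ₁ x
    set p := Φsq x
    set b := D Φsq x
    have hr := hrel x
    have hg := hγ x
    rw [show D Φsq x = b from rfl] at hg
    have hd : 2 * k * K + ((-4 : ℝ) + 2) * k ^ 3 ≠ 0 := by
      have : 2 * k * K + ((-4 : ℝ) + 2) * k ^ 3 = 2 * k * (K - k ^ 2) := by ring
      rw [this]
      have h1 : K - k ^ 2 ≠ 0 := fun h => (hκK x) (by linarith)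
      exact mul_ne_zero (mul_ne_zero two_ne_zero (hκ x)) h1
    have hbk : b * k = p * a := by
      field_simp at hg
      have h1 : K - k ^ 2 ≠ 0 := fun h => (hκK x) (by linarith)
      have : 2 * (K - k ^ 2) * (b * k - p * a) = 0 := by
        have hd' : κ₁ x * (2 * K + κ₁ x ^ 2 * (-4 + 2)) ≠ 0 := by
          change k * (2 * K + k ^ 2 * (-4 + 2)) ≠ 0
          intro h0; apply hd; linear_combination h0
        rw [eq_div_iff hd'] at hg
        change b * (k * (2 * K + k ^ 2 * (-4 + 2))) = 2 * p * (K - k ^ 2) * a at hg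
        linear_combination hg
      have h2 : b * k - p * a = 0 := by
        rcases mul_eq_zero.1 this with h | h
        · exact absurd h (by intro hh; apply h1; nlinarith)
        · exact h
      linarith
    -- E: derivative relation
    have hPp : K ^ 2 * p = K + k ^ 2 := by
      have ha := he x
      have hk0 := hκ x
      have h12 : 12 * (k ^ 2 * a) * (K ^ 2 * p - K - k ^ 2) = 0 := by
        linear_combination k * hE + (-4 * K ^ 2 * k ^ 2) * hbk
      have hka : k ^ 2 * a ≠ 0 := mul_ne_zero (pow_ne_zero 2 hk0) ha
      have := mul_eq_zero.1 h12
      rcases this with h | h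
      · rcases mul_eq_zero.1 h with h' | h'
        · norm_num at h'
        · exact absurd h' hka
      · linarith
    have hsq : (k ^ 2 - K) ^ 2 = 0 := by nlinarith [hr, hPp]
    have := pow_eq_zero_iff (n := 2) (by norm_num) |>.1 hsq
    linarith
  exact ⟨fun x => (hκK x (key x)).elim, key⟩
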